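/- For F ∈ [0, 1], the function S(v) = (1 − 1/(γv))·ĥ(G(v)) − β₂, where G(v) = ωκ₂(1 − F)/(β₂λv), is strictly increasing on the interval [1/γ, 1]. -/

import Mathlib

/-- The nondimensional light-dependent growth function
`ĥ(u) = (1/(u + k₁)) · log((1 + I)/(1 + I·exp(−(u + k₁))))`. -/
noncomputable def hhat (k₁ I u : ℝ) : ℝ :=
  (1 / (u + k₁)) * Real.log ((1 + I) / (1 + I * Real.exp (-(u + k₁))))

/-- Auxiliary: `L(s) = log(1+I) − log(1 + I e^{−s})`. -/
noncomputable def Lfun (I s : ℝ) : ℝ :=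
  Real.log (1 + I) - Real.log (1 + I * Real.exp (-s))

lemma denom_pos {I : ℝ} (hI : 0 < I) (s : ℝ) : 0 < 1 + I * Real.exp (-s) := by
  positivity

lemma hhat_eq {I : ℝ} (hI : 0 < I) (k₁ u : ℝ) :
    hhat k₁ I u = (1 / (u + k₁)) * Lfun I (u + k₁) := by
  unfold hhat Lfun
  rw [Real.log_div (by positivity) (ne_of_gt (denom_pos hI _))]

lemma Lfun_zero (I : ℝ) : Lfun I 0 = 0 := by
  simp [Lfun]

lemma Lfun_pos {I : ℝ} (hI : 0 < I) {s : ℝ} (hs : 0 < s) : 0 < Lfun I s := by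
  unfold Lfun
  have h1 : Real.exp (-s) < 1 := Real.exp_lt_one_iff.mpr (by linarith)
  have : Real.log (1 + I * Real.exp (-s)) < Real.log (1 + I) := by
    apply Real.log_lt_log (denom_pos hI s)
    nlinarith
  linarith

lemma hasDerivAt_Lfun {I : ℝ} (hI : 0 < I) (s : ℝ) :
    HasDerivAt (Lfun I) (I * Real.exp (-s) / (1 + I * Real.exp (-s))) s := by
  have h1 : HasDerivAt (fun x : ℝ => Real.exp (-x)) (Real.exp (-s) * (-1)) s :=
    (Real.hasDerivAt_exp (-s)).comp s (hasDerivAt_neg s)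
  have h2 : HasDerivAt (fun x : ℝ => 1 + I * Real.exp (-x)) (I * (Real.exp (-s) * (-1))) s :=
    (h1.const_mul I).const_add 1
  have h3 : HasDerivAt (fun x : ℝ => Real.log (1 + I * Real.exp (-x)))
      (I * (Real.exp (-s) * (-1)) / (1 + I * Real.exp (-s))) s :=
    h2.log (ne_of_gt (denom_pos hI s))
  have h4 := (hasDerivAt_const s (Real.log (1 + I))).sub h3
  exact h4.congr_deriv (by ring)

lemma deriv_Lfun {I : ℝ} (hI : 0 < I) (s : ℝ) :
    deriv (Lfun I) s = I * Real.exp (-s) / (1 + I * Real.exp (-s)) :=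
  (hasDerivAt_Lfun hI s).deriv

lemma strictConcave_Lfun {I : ℝ} (hI : 0 < I) : StrictConcaveOn ℝ Set.univ (Lfun I) := by
  apply StrictAnti.strictConcaveOn_univ_of_deriv
  · exact continuous_iff_continuousAt.mpr fun x => (hasDerivAt_Lfun hI x).continuousAt
  · intro s t hst
    rw [deriv_Lfun hI, deriv_Lfun hI]
    rw [div_lt_div_iff₀ (denom_pos hI t) (denom_pos hI s)]
    have he : Real.exp (-t) < Real.exp (-s) := Real.exp_lt_exp.mpr (by linarith)
    have h1 : 0 < Real.exp (-t) := Real.exp_pos _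
    nlinarith

/-- `L(s)/s` is strictly decreasing on `s > 0`. -/
lemma Lfun_div_strict_anti {I : ℝ} (hI : 0 < I) {s t : ℝ} (hs : 0 < s) (hst : s < t) :
    Lfun I t / t < Lfun I s / s := by
  have ht : 0 < t := hs.trans hst
  have key : (s / t) * Lfun I t < Lfun I s := by
    have hw1 : (0:ℝ) < s / t := by positivity
    have hw2 : (0:ℝ) < 1 - s / t := by rw [sub_pos, div_lt_one ht]; exact hst
    have hw3 : s / t + (1 - s / t) = 1 := by ring
    have h := (strictConcave_Lfun hI).2 (Set.mem_univ t) (Set.mem_univ 0)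
      (fun h => absurd h (ne_of_gt ht)) hw1 hw2 hw3
    simp only [smul_eq_mul, mul_zero, Lfun_zero, add_zero] at h
    rwa [div_mul_cancel₀ _ (ne_of_gt ht)] at h
  rw [div_lt_div_iff₀ ht hs]
  have := mul_lt_mul_of_pos_left key ht
  calc Lfun I t * s = t * ((s / t) * Lfun I t) := by field_simp
    _ < t * Lfun I s := this
    _ = Lfun I s * t := by ring

lemma hhat_pos {k₁ I : ℝ} (hk₁ : 0 < k₁) (hI : 0 < I) {u : ℝ} (hu : 0 ≤ u) :
    0 < hhat k₁ I u := by
  rw [hhat_eq hI]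
  have hs : 0 < u + k₁ := by linarith
  exact mul_pos (by positivity) (Lfun_pos hI hs)

lemma hhat_anti {k₁ I : ℝ} (hk₁ : 0 < k₁) (hI : 0 < I) {u₁ u₂ : ℝ}
    (h1 : 0 ≤ u₁) (h : u₁ < u₂) : hhat k₁ I u₂ < hhat k₁ I u₁ := by
  rw [hhat_eq hI, hhat_eq hI]
  have hs : 0 < u₁ + k₁ := by linarith
  have hst : u₁ + k₁ < u₂ + k₁ := by linarith
  have := Lfun_div_strict_anti hI hs hst
  rw [one_div, one_div, ← div_eq_inv_mul, ← div_eq_inv_mul]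
  exact this

/-- `S(v) = (1 − 1/(γv))·ĥ(G(v)) − β₂`, with `G(v) = ωκ₂(1 − F)/(β₂λv)`, is strictly
increasing on `[1/γ, 1]`. -/
theorem stmt_2 (k₁ I ω κ₂ lam β₂ γ F : ℝ)
    (hk₁ : 0 < k₁) (hI : 0 < I) (hω : 0 < ω) (hκ₂ : 0 < κ₂) (hlam : 0 < lam)
    (hβ₂ : 0 < β₂) (hγ : 1 < γ) (hF : F ∈ Set.Icc (0 : ℝ) 1) :
    StrictMonoOn
      (fun v : ℝ => (1 - 1 / (γ * v)) * hhat k₁ I (ω * κ₂ * (1 - F) / (β₂ * lam * v)) - β₂)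
      (Set.Icc (1 / γ) 1) := by
  have hγ0 : 0 < γ := by linarith
  intro a ha b hb hab
  have ha0 : 0 < a := lt_of_lt_of_le (by positivity) ha.1
  have hb0 : 0 < b := ha0.trans hab
  have hγa : 1 ≤ γ * a := (div_le_iff₀' hγ0).mp ha.1
  set C := ω * κ₂ * (1 - F) / (β₂ * lam) with hC
  have hCnn : 0 ≤ C := by
    have : 0 ≤ 1 - F := by linarith [hF.2]
    positivity
  have hGa : ω * κ₂ * (1 - F) / (β₂ * lam * a) = C / a := by rw [hC, div_div]
  have hGb : ω * κ₂ * (1 - F) / (β₂ * lam * b) = C / b := by rw [hC, div_div]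
  simp only [hGa, hGb]
  have hfa0 : 0 ≤ 1 - 1 / (γ * a) := by
    have : 1 / (γ * a) ≤ 1 := by
      rw [div_le_one (by positivity)]; exact hγa
    linarith
  have hfab : 1 - 1 / (γ * a) < 1 - 1 / (γ * b) := by
    have : 1 / (γ * b) < 1 / (γ * a) :=
      one_div_lt_one_div_of_lt (by positivity) (by nlinarith)
    linarith
  have hgb0 : 0 < hhat k₁ I (C / b) := hhat_pos hk₁ hI (by positivity)
  have hgab : hhat k₁ I (C / a) ≤ hhat k₁ I (C / b) := by
    rcases eq_or_lt_of_le hCnn with h0 | hCpos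
    · rw [← h0]; simp
    · have : C / b < C / a := by
        rw [div_lt_div_iff₀ hb0 ha0]
        nlinarith
      exact le_of_lt (hhat_anti hk₁ hI (by positivity) this)
  have hga0 : 0 < hhat k₁ I (C / a) := hhat_pos hk₁ hI (by positivity)
  nlinarith [mul_le_mul_of_nonneg_left hgab hfa0,
    mul_lt_mul_of_pos_right hfab hgb0]
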